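/- arXiv:2512.13329 — 2 statements merged into one kernel-verified Lean document; each statement's English description precedes it below -/
import Mathlib

section
/- Let A be an n×n matrix over a commutative ring R, and let M_n = Σ_{1≤i<j≤n} E_{ij} be the strictly upper triangular matrix of all ones. Then the determinant of the 2n×2n block matrix [[I_n, I_n − A], [−M_n, I_n]] equals the determinant of I_{n−1} − Â, where Â is the (n−1)×(n−1) matrix obtained from A by deleting its first row and its last column. -/
open Matrix

/-- The determinant of the block matrix `[[I, I - A], [-M, I]]`, where `M` is the
strictly upper triangular all-ones matrix, equals `det (I - Â)` where `Â` is `A`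
with its first row and last column deleted. -/
theorem stmt0 {R : Type*} [CommRing R] (n : ℕ)
    (A : Matrix (Fin (n + 1)) (Fin (n + 1)) R)
    (M : Matrix (Fin (n + 1)) (Fin (n + 1)) R)
    (hM : M = Matrix.of fun i j => if i < j then (1 : R) else 0)
    (Ahat : Matrix (Fin n) (Fin n) R)
    (hAhat : Ahat = Matrix.of fun k l => A k.succ l.castSucc) :
    (Matrix.fromBlocks 1 (1 - A) (-M) 1).det = (1 - Ahat).det := by
  -- the shift matrix
  set S : Matrix (Fin (n+1)) (Fin (n+1)) R :=
    Matrix.of (fun i j => if (i : ℕ) + 1 = (j : ℕ) then (1 : R) else 0) with hS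
  -- S applied at rows
  have hScast : ∀ (i : Fin n) (j : Fin (n+1)), S i.castSucc j = if j = i.succ then 1 else 0 := by
    intro i j
    simp only [hS, of_apply, Fin.coe_castSucc]
    congr 1
    simp [Fin.ext_iff, eq_comm]
  have hSlast : ∀ j : Fin (n+1), S (Fin.last n) j = 0 := by
    intro j
    simp only [hS, of_apply, Fin.val_last]
    have : ¬ (n + 1 = (j : ℕ)) := by omega
    simp [this]
  -- (1 + M) * S = M
  have hJS : (1 + M) * S = M := by
    ext i j
    rw [Matrix.mul_apply]
    refine Fin.cases ?_ ?_ j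
    · have : ∀ k : Fin (n+1), S k 0 = 0 := by
        intro k; simp [hS]
      simp [this, hM]
    · intro j'
      have hSk : ∀ k : Fin (n+1), S k j'.succ = if k = j'.castSucc then 1 else 0 := by
        intro k
        simp only [hS, of_apply, Fin.val_succ]
        congr 1
        simp [Fin.ext_iff]
      simp only [hSk, mul_ite, mul_one, mul_zero, Finset.sum_ite_eq', Finset.mem_univ, if_true]
      simp only [hM, Matrix.add_apply, Matrix.one_apply, of_apply]
      rcases lt_trichotomy i (j'.castSucc) with h | h | h
      · have h1 : i ≠ j'.castSucc := ne_of_lt h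
        have h2 : i < j'.succ := h.trans Fin.castSucc_lt_succ
        simp [h1, h, h2]
      · subst h
        simp [Fin.castSucc_lt_succ]
      · have h1 : i ≠ j'.castSucc := ne_of_gt h
        have h2 : ¬ i < j'.succ := by
          rw [Fin.lt_def] at h ⊢
          simp only [Fin.coe_castSucc] at h
          simp only [Fin.val_succ]; omega
        simp [h1, not_lt_of_gt h, h2]
  -- det (1 + M) = 1
  have hdetJ : (1 + M : Matrix (Fin (n+1)) (Fin (n+1)) R).det = 1 := by
    have ht : (1 + M : Matrix (Fin (n+1)) (Fin (n+1)) R).BlockTriangular id := by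
      intro i j hij
      simp only [id] at hij
      have h1 : i ≠ j := ne_of_gt hij
      rw [Matrix.add_apply, Matrix.one_apply_ne h1, hM]
      simp [not_lt_of_gt hij]
    rw [Matrix.det_of_upperTriangular ht]
    have : ∀ i, (1 + M : Matrix (Fin (n+1)) (Fin (n+1)) R) i i = 1 := by
      intro i; simp [hM]
    simp [this]
  -- reduce to det (1 - S * A)
  have key : (Matrix.fromBlocks 1 (1 - A) (-M) (1 : Matrix (Fin (n+1)) (Fin (n+1)) R)).det
      = (1 - S * A).det := by
    rw [Matrix.det_fromBlocks_one₁₁]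
    have h1 : (1 : Matrix (Fin (n+1)) (Fin (n+1)) R) - (-M) * (1 - A)
        = (1 + M) * (1 - S * A) := by
      have h2 : (1 + M) * (S * A) = M * A := by rw [← Matrix.mul_assoc, hJS]
      calc (1 : Matrix (Fin (n+1)) (Fin (n+1)) R) - (-M) * (1 - A)
          = (1 + M) * 1 - (M * A) := by noncomm_ring
        _ = (1 + M) * 1 - (1 + M) * (S * A) := by rw [h2]
        _ = (1 + M) * (1 - S * A) := by rw [Matrix.mul_sub]
    rw [h1, Matrix.det_mul, hdetJ, one_mul]
  rw [key]
  -- now expand along the last row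
  set B : Matrix (Fin (n+1)) (Fin (n+1)) R := 1 - S * A with hB
  have hBlast : ∀ j, B (Fin.last n) j = if Fin.last n = j then 1 else 0 := by
    intro j
    simp [hB, Matrix.mul_apply, hSlast, Matrix.one_apply]
  have hsub : B.submatrix Fin.castSucc Fin.castSucc = 1 - Ahat := by
    ext i j
    have hrow : (S * A) i.castSucc j.castSucc = A i.succ j.castSucc := by
      rw [Matrix.mul_apply]
      simp [hScast, ite_mul]
    simp only [Matrix.submatrix_apply, hB, Matrix.sub_apply, hrow, hAhat, of_apply,
      Matrix.one_apply]
    congr 1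
    simp [Fin.castSucc_inj]
  rw [Matrix.det_succ_row B (Fin.last n)]
  rw [Finset.sum_eq_single (Fin.last n)]
  · rw [hBlast]
    simp only [if_pos rfl, mul_one]
    simp only [if_true]
    rw [Fin.succAbove_last, hsub]
    have : ((-1 : R)) ^ ((Fin.last n : ℕ) + (Fin.last n : ℕ)) = 1 := by
      apply Even.neg_one_pow
      exact ⟨(Fin.last n : ℕ), rfl⟩
    rw [this]; ring
  · intro j _ hj
    rw [hBlast, if_neg (Ne.symm hj)]
    ring
  · intro h
    exact absurd (Finset.mem_univ _) h
end

section
/- Single-variable contraction theorem: in k[[h]] with variables r, s, let f, g, w be scalars with 1 − w invertible, and set w̃ = (1 − w)^{-1}. Then ⟨exp(g s + r f + r w s)⟩ = w̃ · exp(g w̃ f), where ⟨·⟩ is the Gaussian contraction functional ⟨F⟩ = Σ_m (1/m!)(∂_r^m ∂_s^m F)|_{r=s=0} applied to the formal power series F. -/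
open MvPolynomial

/-- The Gaussian contraction functional `⟨F⟩ = Σ_m (1/m!) (∂_r^m ∂_s^m F)|_{r=s=0}` on
`B[r, s]` (variable `0` is `r`, variable `1` is `s`), for `B` a commutative ℚ-algebra. -/
noncomputable def gContr (B : Type*) [CommRing B] [Algebra ℚ B]
    (F : MvPolynomial (Fin 2) B) : B :=
  ∑ m ∈ Finset.range (F.totalDegree + 1),
    (m.factorial : ℚ)⁻¹ •
      MvPolynomial.eval 0 ((pderiv (0 : Fin 2))^[m] ((pderiv (1 : Fin 2))^[m] F))

set_option linter.unusedSectionVars false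
open Finset

section Stmt13Aux
variable {B : Type*} [CommRing B] [Algebra ℚ B]

theorem d0_comm_X1 (a e : ℕ) (z : MvPolynomial (Fin 2) B) :
    (pderiv (0 : Fin 2))^[a] (z * X 1 ^ e) = ((pderiv (0 : Fin 2))^[a] z) * X 1 ^ e := by
  induction a generalizing z with
  | zero => simp
  | succ a ih =>
    rw [Function.iterate_succ_apply, pderiv_mul, pderiv_pow, pderiv_X_of_ne (by decide)]
    simp only [mul_zero, add_zero, Function.iterate_succ_apply]
    exact ih _

theorem pderiv_natCast (i : Fin 2) (n : ℕ) : pderiv i (n : MvPolynomial (Fin 2) B) = 0 := by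
  rw [← C_eq_coe_nat, pderiv_C]

theorem pd_step (i : Fin 2) (v : MvPolynomial (Fin 2) B) (hv : pderiv i v = 0) (t : ℕ) :
    pderiv i (v * X i ^ t) = (t : MvPolynomial (Fin 2) B) * v * X i ^ (t - 1) := by
  rw [pderiv_mul, hv, pderiv_pow, pderiv_X_self]
  cases t with
  | zero => simp
  | succ n => push_cast; ring_nf

theorem pd_iter (i : Fin 2) (t j : ℕ) : ∀ (v : MvPolynomial (Fin 2) B), pderiv i v = 0 →
    (pderiv i)^[j] (v * X i ^ t) =
      (t.descFactorial j : MvPolynomial (Fin 2) B) * v * X i ^ (t - j) := by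
  induction j generalizing t with
  | zero => intro v hv; simp
  | succ j ih =>
    intro v hv
    rw [Function.iterate_succ_apply, pd_step i v hv t,
      show (t : MvPolynomial (Fin 2) B) * v * X i ^ (t-1) = ((t : MvPolynomial (Fin 2) B) * v) * X i ^ (t-1) from by ring,
      ih (t-1) ((t : MvPolynomial (Fin 2) B) * v) (by rw [pderiv_mul, hv]; simp)]
    rw [Nat.sub_sub]
    cases t with
    | zero => simp
    | succ n =>
      rw [Nat.succ_descFactorial_succ]
      push_cast
      rw [show n + 1 - (1 + j) = n - j from by omega]
      ring

theorem iter_pd_sum {ι : Type*} (i : Fin 2) (j : ℕ) (s : Finset ι)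
    (F : ι → MvPolynomial (Fin 2) B) :
    (pderiv i)^[j] (∑ t ∈ s, F t) = ∑ t ∈ s, (pderiv i)^[j] (F t) := by
  induction j with
  | zero => simp
  | succ j ih => simp only [Function.iterate_succ_apply', ih, map_sum]

theorem evalD0_inner (f g w : B) (a b mb : ℕ) :
    eval (0 : Fin 2 → B) ((pderiv (0 : Fin 2))^[a]
      ((C g + C w * X 0) ^ b * (X 0 * C f) ^ mb)) =
    if mb ≤ a ∧ a ≤ mb + b then
      ((a.factorial * b.choose (a - mb) : ℕ) : B) *
        (g ^ (b - (a - mb)) * (f ^ mb * w ^ (a - mb)))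
    else 0 := by
  have expand2 : (C g + C w * X 0 : MvPolynomial (Fin 2) B) ^ b * (X 0 * C f) ^ mb
      = ∑ l ∈ range (b + 1),
          (C (w ^ l) * C (g ^ (b - l)) * C (f ^ mb) *
            (b.choose l : MvPolynomial (Fin 2) B)) * X 0 ^ (l + mb) := by
    rw [show (C g + C w * X 0 : MvPolynomial (Fin 2) B) = C w * X 0 + C g from by ring, add_pow, Finset.sum_mul]
    refine Finset.sum_congr rfl fun l _ => ?_
    rw [mul_pow, mul_pow, ← C_pow, ← C_pow, ← C_pow, pow_add]
    ring
  rw [expand2, iter_pd_sum, map_sum]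
  have hterm : ∀ l, l ∈ range (b + 1) →
      eval (0 : Fin 2 → B) ((pderiv (0 : Fin 2))^[a]
        ((C (w ^ l) * C (g ^ (b - l)) * C (f ^ mb) *
          (b.choose l : MvPolynomial (Fin 2) B)) * X 0 ^ (l + mb)))
      = if l + mb = a then
          ((a.factorial * b.choose l : ℕ) : B) * (g ^ (b - l) * (f ^ mb * w ^ l))
        else 0 := by
    intro l _
    rw [pd_iter 0 (l + mb) a _ (by simp [pderiv_mul, pderiv_natCast])]
    simp only [map_mul, map_pow, eval_C, map_natCast, eval_X, Pi.zero_apply]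
    rcases lt_trichotomy (l + mb) a with h | h | h
    · rw [if_neg (by omega), Nat.descFactorial_eq_zero_iff_lt.2 h]
      simp
    · rw [if_pos h, h, Nat.sub_self, pow_zero, Nat.descFactorial_self]
      push_cast
      ring
    · rw [if_neg (by omega), zero_pow (by omega)]
      ring
  rw [Finset.sum_congr rfl hterm]
  by_cases hQ : mb ≤ a ∧ a ≤ mb + b
  · rw [if_pos hQ]
    have : ∀ l ∈ range (b + 1), (if l + mb = a then
          ((a.factorial * b.choose l : ℕ) : B) * (g ^ (b - l) * (f ^ mb * w ^ l))
        else 0) = if l = a - mb then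
          ((a.factorial * b.choose (a - mb) : ℕ) : B) *
            (g ^ (b - (a - mb)) * (f ^ mb * w ^ (a - mb))) else 0 := by
      intro l hl
      by_cases h : l + mb = a
      · rw [if_pos h, if_pos (by omega)]
        have : l = a - mb := by omega
        subst this; rfl
      · rw [if_neg h, if_neg (by omega)]
    rw [Finset.sum_congr rfl this, Finset.sum_ite_eq' (range (b+1))]
    rw [if_pos (by simp; omega)]
  · rw [if_neg hQ]
    refine Finset.sum_eq_zero fun l hl => ?_
    rw [if_neg (by simp at hl; omega)]
theorem iter_pd_C_mul (i : Fin 2) (j : ℕ) (c : B) (z : MvPolynomial (Fin 2) B) :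
    (pderiv i)^[j] (C c * z) = C c * (pderiv i)^[j] z := by
  induction j generalizing z with
  | zero => simp
  | succ j ih =>
    rw [Function.iterate_succ_apply, pderiv_C_mul, ih, ← Function.iterate_succ_apply]

theorem Tab (f g w : B) (a b m : ℕ) :
    eval (0 : Fin 2 → B) ((pderiv (0 : Fin 2))^[a] ((pderiv (1 : Fin 2))^[b]
      ((C g * X 1 + X 0 * C f + X 0 * C w * X 1) ^ m))) =
    if b ≤ m ∧ a ≤ m ∧ m ≤ a + b then
      ((b.factorial * m.choose b * (a.factorial * b.choose (a + b - m)) : ℕ) : B) *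
        (g ^ (m - a) * (f ^ (m - b) * w ^ (a + b - m)))
    else 0 := by
  have expand : (C g * X 1 + X 0 * C f + X 0 * C w * X 1 : MvPolynomial (Fin 2) B) ^ m
      = ∑ t ∈ range (m + 1),
          ((m.choose t : MvPolynomial (Fin 2) B) * ((C g + C w * X 0) ^ t * (X 0 * C f) ^ (m - t)))
            * X 1 ^ t := by
    rw [show (C g * X 1 + X 0 * C f + X 0 * C w * X 1 : MvPolynomial (Fin 2) B)
        = (C g + C w * X 0) * X 1 + X 0 * C f from by ring, add_pow]
    refine Finset.sum_congr rfl fun t _ => ?_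
    rw [mul_pow]; ring
  rw [expand, iter_pd_sum, iter_pd_sum, map_sum]
  have hv : ∀ t, pderiv (1 : Fin 2)
      ((m.choose t : MvPolynomial (Fin 2) B) * ((C g + C w * X 0) ^ t * (X 0 * C f) ^ (m - t)))
      = 0 := by
    intro t
    simp [pderiv_mul, pderiv_natCast, pderiv_pow, pderiv_X_of_ne (show (0:Fin 2) ≠ 1 by decide)]
  have hterm : ∀ t ∈ range (m + 1),
      eval (0 : Fin 2 → B) ((pderiv (0 : Fin 2))^[a] ((pderiv (1 : Fin 2))^[b]
        (((m.choose t : MvPolynomial (Fin 2) B) *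
          ((C g + C w * X 0) ^ t * (X 0 * C f) ^ (m - t))) * X 1 ^ t)))
      = if t = b then
          ((b.factorial * m.choose b : ℕ) : B) *
            eval (0 : Fin 2 → B) ((pderiv (0 : Fin 2))^[a]
              ((C g + C w * X 0) ^ b * (X 0 * C f) ^ (m - b)))
        else 0 := by
    intro t _
    rw [pd_iter 1 t b _ (hv t)]
    rcases lt_trichotomy t b with h | h | h
    · rw [if_neg (by omega), Nat.descFactorial_eq_zero_iff_lt.2 h]
      simp
    · subst h
      rw [if_pos rfl, Nat.sub_self, pow_zero, mul_one, Nat.descFactorial_self]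
      rw [show (t.factorial : MvPolynomial (Fin 2) B) *
            ((m.choose t : MvPolynomial (Fin 2) B) * ((C g + C w * X 0) ^ t * (X 0 * C f) ^ (m - t)))
          = C (((t.factorial * m.choose t : ℕ) : B)) *
            ((C g + C w * X 0) ^ t * (X 0 * C f) ^ (m - t)) from by
        rw [C_eq_coe_nat]; push_cast; ring]
      rw [iter_pd_C_mul, map_mul, eval_C]
    · rw [d0_comm_X1, map_mul, map_pow, eval_X]
      rw [if_neg (by omega)]
      simp [zero_pow (show t - b ≠ 0 by omega)]
  rw [Finset.sum_congr rfl hterm, Finset.sum_ite_eq' (range (m + 1)) b]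
  by_cases hb : b ≤ m
  · rw [if_pos (by simp; omega), evalD0_inner]
    by_cases hc : a ≤ m ∧ m ≤ a + b
    · rw [if_pos (by omega), if_pos (by exact ⟨hb, hc.1, hc.2⟩)]
      rw [show a - (m - b) = a + b - m from by omega, show b - (a + b - m) = m - a from by omega]
      push_cast
      ring
    · rw [if_neg (by omega), if_neg (by tauto), mul_zero]
  · rw [if_neg (by simp; omega), if_neg (by tauto)]

theorem td_step (i : Fin 2) (p : MvPolynomial (Fin 2) B) (d : ℕ) (hp : p.totalDegree ≤ d + 1) :
    (pderiv i p).totalDegree ≤ d := by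
  have hrw : pderiv i p = ∑ v ∈ p.support,
      monomial (v - Finsupp.single i 1) (coeff v p * v i) := by
    conv_lhs => rw [p.as_sum]
    rw [map_sum]
    exact Finset.sum_congr rfl fun v _ => pderiv_monomial
  rw [hrw]
  refine (totalDegree_finset_sum _ _).trans (Finset.sup_le fun v hv => ?_)
  by_cases hvi : v i = 0
  · simp [hvi]
  · refine (totalDegree_monomial_le _ _).trans ?_
    have hle : (Finsupp.single i 1 : Fin 2 →₀ ℕ) ≤ v := by
      rw [Finsupp.single_le_iff]; omega
    have hsum : (v - Finsupp.single i 1).sum (fun _ e => e) + 1 = v.sum (fun _ e => e) := by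
      have : (v - Finsupp.single i 1) + Finsupp.single i 1 = v := tsub_add_cancel_of_le hle
      calc (v - Finsupp.single i 1).sum (fun _ e => e) + 1
          = ((v - Finsupp.single i 1) + Finsupp.single i 1).sum (fun _ e => e) := by
            rw [Finsupp.sum_add_index' (fun _ => rfl) (fun _ _ _ => rfl)]
            simp [Finsupp.sum_single_index]
        _ = v.sum (fun _ e => e) := by rw [this]
    have h2 := le_totalDegree hv
    show (v - Finsupp.single i 1).sum (fun _ e => e) ≤ d
    omega

theorem iter_vanish (i : Fin 2) : ∀ (j : ℕ) (p : MvPolynomial (Fin 2) B),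
    p.totalDegree ≤ j → (pderiv i)^[j + 1] p = 0 := by
  intro j
  induction j with
  | zero =>
    intro p hp
    rw [Function.iterate_one]
    have h0 := (totalDegree_eq_zero_iff _ p).1 (Nat.le_zero.1 hp)
    conv_lhs => rw [p.as_sum]
    rw [map_sum]
    refine Finset.sum_eq_zero fun v hv => ?_
    rw [pderiv_monomial, h0 v hv i]
    simp
  | succ j ih =>
    intro p hp
    rw [Function.iterate_succ_apply]
    exact ih _ (td_step i p j hp)

theorem nat_cancel (n : ℕ) (hn : 0 < n) (x : B) (h : (n : B) * x = 0) : x = 0 := by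
  have h1 : (n : B) = algebraMap ℚ B (n : ℚ) := by push_cast; rfl
  have h2 : ((n : ℚ)⁻¹ • ((n : B) * x)) = x := by
    rw [h1, ← Algebra.smul_def, smul_smul, inv_mul_cancel₀ (by positivity), one_smul]
  rw [← h2, h, smul_zero]

theorem pow_vanish (x : B) (N : ℕ) (hx : x ^ N = 0) (K : ℕ) (hK : N ≤ K) : x ^ K = 0 := by
  rw [show K = (K - N) + N from by omega, pow_add, hx, mul_zero]

theorem wt_geom (w wt : B) (hwt : wt * (1 - w) = 1) (N : ℕ) (hw : w ^ N = 0)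
    (K : ℕ) (hK : N ≤ K) : wt = ∑ k ∈ range K, w ^ k := by
  have h1 : (∑ k ∈ range K, w ^ k) * (1 - w) = 1 := by
    have := geom_sum_mul w K
    have h2 : w ^ K = 0 := pow_vanish w N hw K hK
    rw [h2] at this
    calc (∑ k ∈ range K, w ^ k) * (1 - w) = -((∑ k ∈ range K, w ^ k) * (w - 1)) := by ring
      _ = -(0 - 1) := by rw [this]
      _ = 1 := by ring
  calc wt = wt * ((∑ k ∈ range K, w ^ k) * (1 - w)) := by rw [h1, mul_one]
    _ = (∑ k ∈ range K, w ^ k) * (wt * (1 - w)) := by ring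
    _ = ∑ k ∈ range K, w ^ k := by rw [hwt, mul_one]

theorem wt_pow (w wt : B) (hwt : wt * (1 - w) = 1) (N : ℕ) (hN : 0 < N) (hw : w ^ N = 0)
    (K : ℕ) (hK : N ≤ K) (n : ℕ) :
    wt ^ (n + 1) = ∑ k ∈ range K, ((n + k).choose k : B) * w ^ k := by
  induction n with
  | zero =>
    simp only [zero_add, Nat.choose_self]
    rw [pow_one, wt_geom w wt hwt N hw K hK]
    refine Finset.sum_congr rfl fun k _ => ?_
    simp [Nat.choose_self]
  | succ n ih =>
    obtain ⟨P, rfl⟩ : ∃ P, K = P + 1 := ⟨K - 1, by omega⟩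
    have key : (1 - w) * (∑ k ∈ range (P + 1), ((n + 1 + k).choose k : B) * w ^ k)
        = ∑ k ∈ range (P + 1), ((n + k).choose k : B) * w ^ k := by
      rw [one_sub_mul, Finset.mul_sum]
      rw [Finset.sum_range_succ' (fun k => ((n + 1 + k).choose k : B) * w ^ k) P]
      rw [Finset.sum_range_succ (fun k => w * (((n + 1 + k).choose k : B) * w ^ k)) P]
      rw [Finset.sum_range_succ' (fun k => ((n + k).choose k : B) * w ^ k) P]
      have hwP : w * (((n + 1 + P).choose P : B) * w ^ P) = 0 := by
        have : w ^ (P + 1) = 0 := pow_vanish w N hw (P + 1) hK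
        calc w * (((n + 1 + P).choose P : B) * w ^ P)
            = ((n + 1 + P).choose P : B) * w ^ (P + 1) := by ring
          _ = 0 := by rw [this, mul_zero]
      rw [hwP, add_zero]
      have hterm : ∀ k, ((n + 1 + (k + 1)).choose (k + 1) : B) * w ^ (k + 1)
          = ((n + (k + 1)).choose (k + 1) : B) * w ^ (k + 1)
            + w * (((n + 1 + k).choose k : B) * w ^ k) := by
        intro k
        rw [show n + 1 + (k + 1) = (n + k + 1) + 1 from by ring, Nat.choose_succ_succ]
        rw [show n + k + 1 = n + 1 + k from by ring]
        push_cast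
        rw [show n + (k + 1) = n + 1 + k from by ring]
        ring
      rw [Finset.sum_congr rfl (fun k _ => hterm k), Finset.sum_add_distrib]
      simp only [Nat.choose_zero_right, Nat.cast_one, pow_zero]
      ring
    calc wt ^ (n + 1 + 1) = wt * wt ^ (n + 1) := by ring
      _ = wt * ∑ k ∈ range (P + 1), ((n + k).choose k : B) * w ^ k := by rw [ih]
      _ = wt * ((1 - w) * ∑ k ∈ range (P + 1), ((n + 1 + k).choose k : B) * w ^ k) := by rw [key]
      _ = (wt * (1 - w)) * ∑ k ∈ range (P + 1), ((n + 1 + k).choose k : B) * w ^ k := by ring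
      _ = ∑ k ∈ range (P + 1), ((n + 1 + k).choose k : B) * w ^ k := by rw [hwt, one_mul]
theorem iter_pd_zero (i : Fin 2) (j : ℕ) : (pderiv i)^[j] (0 : MvPolynomial (Fin 2) B) = 0 :=
  Function.iterate_fixed (map_zero _) j

theorem base_vanish (f g w : B) (N : ℕ)
    (hN : (C g * X 1 + X 0 * C f + X 0 * C w * X 1 : MvPolynomial (Fin 2) B) ^ N = 0)
    (i j k : ℕ) (hijk : i + j + k = N) : g ^ i * (f ^ j * w ^ k) = 0 := by
  have h0 : eval (0 : Fin 2 → B) ((pderiv (0 : Fin 2))^[j + k] ((pderiv (1 : Fin 2))^[i + k]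
      ((C g * X 1 + X 0 * C f + X 0 * C w * X 1 : MvPolynomial (Fin 2) B) ^ N))) = 0 := by
    rw [hN, iter_pd_zero, iter_pd_zero, map_zero]
  rw [Tab] at h0
  rw [if_pos (by omega)] at h0
  rw [show N - (j + k) = i from by omega, show N - (i + k) = j from by omega,
    show j + k + (i + k) - N = k from by omega] at h0
  exact nat_cancel _ (Nat.mul_pos
    (Nat.mul_pos (Nat.factorial_pos (i + k)) (Nat.choose_pos (show i + k ≤ N by omega)))
    (Nat.mul_pos (Nat.factorial_pos (j + k))
      (Nat.choose_pos (show k ≤ i + k by omega)))) _ h0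

theorem gen_vanish (f g w : B) (N : ℕ)
    (hN : (C g * X 1 + X 0 * C f + X 0 * C w * X 1 : MvPolynomial (Fin 2) B) ^ N = 0)
    (i j k : ℕ) (hijk : N ≤ i + j + k) : g ^ i * (f ^ j * w ^ k) = 0 := by
  set i' := min i N with hi'
  set j' := min j (N - i') with hj'
  set k' := N - i' - j' with hk'
  have h1 : i' ≤ i ∧ j' ≤ j ∧ k' ≤ k ∧ i' + j' + k' = N := by omega
  have e1 : g ^ i = g ^ (i - i') * g ^ i' := by rw [← pow_add]; congr 1; omega
  have e2 : f ^ j = f ^ (j - j') * f ^ j' := by rw [← pow_add]; congr 1; omega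
  have e3 : w ^ k = w ^ (k - k') * w ^ k' := by rw [← pow_add]; congr 1; omega
  have h2 : g ^ i * (f ^ j * w ^ k)
      = (g ^ (i - i') * (f ^ (j - j') * w ^ (k - k'))) * (g ^ i' * (f ^ j' * w ^ k')) := by
    rw [e1, e2, e3]; ring
  rw [h2, base_vanish f g w N hN i' j' k' (by omega), mul_zero]

theorem coeff_id (n k : ℕ) :
    ((n + k).factorial : ℚ)⁻¹ * ((2 * n + k).factorial : ℚ)⁻¹ *
      (((n + k).factorial * ((2 * n + k).choose (n + k)) *
        ((n + k).factorial * ((n + k).choose k)) : ℕ) : ℚ)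
    = (n.factorial : ℚ)⁻¹ * (((n + k).choose k : ℕ) : ℚ) := by
  have A : (2 * n + k).choose (n + k) * (n + k).factorial * n.factorial
      = (2 * n + k).factorial := by
    have := Nat.choose_mul_factorial_mul_factorial (show n + k ≤ 2 * n + k by omega)
    rw [show 2 * n + k - (n + k) = n from by omega] at this
    exact this
  have hf1 : ((n + k).factorial : ℚ) ≠ 0 := by positivity
  have hf2 : ((2 * n + k).factorial : ℚ) ≠ 0 := by positivity
  have hf3 : ((n).factorial : ℚ) ≠ 0 := by positivity
  field_simp
  rw [show ((2 * n + k).factorial : ℚ)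
      = (((2 * n + k).choose (n + k) * (n + k).factorial * n.factorial : ℕ) : ℚ) from by
    rw [A]]
  push_cast
  ring

end Stmt13Aux

/-- Single-variable contraction theorem: with scalars `f, g, w` such that `1 - w` is
invertible with inverse `w̃`, one has `⟨exp (g s + r f + r w s)⟩ = w̃ · exp (g w̃ f)`.
The exponentials are the finite truncated sums, which equal the full exponentials
since `g s + r f + r w s` and `g w̃ f` are assumed nilpotent (the rigorous rendering of
h-adic convergence: all quantities carry a formal parameter `h`). -/
theorem stmt13 (B : Type*) [CommRing B] [Algebra ℚ B]
    (f g w wt : B) (hwt : wt * (1 - w) = 1)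
    (u : MvPolynomial (Fin 2) B)
    (hu : u = C g * X 1 + X 0 * C f + X 0 * C w * X 1)
    (N M : ℕ) (hN : u ^ N = 0) (hM : (g * wt * f) ^ M = 0) :
    gContr B (∑ m ∈ Finset.range N, (m.factorial : ℚ)⁻¹ • u ^ m) =
      wt * ∑ m ∈ Finset.range M, (m.factorial : ℚ)⁻¹ • (g * wt * f) ^ m := by
  subst hu
  rcases Nat.eq_zero_or_pos N with rfl | hN1
  · have h2 : (1 : MvPolynomial (Fin 2) B) = 0 := by rw [← pow_zero
      (C g * X 1 + X 0 * C f + X 0 * C w * X 1 : MvPolynomial (Fin 2) B)]; exact hN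
    have h1 : (1 : B) = 0 := by
      calc (1:B) = eval (0 : Fin 2 → B) 1 := by simp
        _ = eval (0 : Fin 2 → B) 0 := by rw [h2]
        _ = 0 := by simp
    have hall : ∀ b : B, b = 0 := fun b => by rw [← mul_one b, h1, mul_zero]
    exact (hall _).trans (hall _).symm
  rcases Nat.eq_zero_or_pos M with rfl | hM1
  · have h1 : (1 : B) = 0 := by rw [← pow_zero (g * wt * f)]; exact hM
    have hall : ∀ b : B, b = 0 := fun b => by rw [← mul_one b, h1, mul_zero]
    exact (hall _).trans (hall _).symm
  have hsmulB : ∀ (q : ℚ) (x : B), q • x = algebraMap ℚ B q * x := fun q x => Algebra.smul_def q x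
  have hsmulR : ∀ (q : ℚ) (p : MvPolynomial (Fin 2) B),
      q • p = C (algebraMap ℚ B q) * p := by
    intro q p
    rw [Algebra.smul_def, IsScalarTower.algebraMap_apply ℚ B (MvPolynomial (Fin 2) B),
      algebraMap_eq]
  have hwN : w ^ N = 0 := by
    have := base_vanish f g w N hN 0 0 N (by omega)
    simpa using this
  have hgfM : (g * f) ^ M = 0 := by
    have h1 : ((g * wt * f) * (1 - w)) ^ M = 0 := by rw [mul_pow, hM, zero_mul]
    calc (g * f) ^ M = ((g * wt * f) * (1 - w)) ^ M := by
          congr 1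
          calc g * f = g * f * (wt * (1 - w)) := by rw [hwt, mul_one]
            _ = g * wt * f * (1 - w) := by ring
      _ = 0 := h1
  set S := N + M with hS
  set F : MvPolynomial (Fin 2) B := ∑ m ∈ Finset.range N,
      (m.factorial : ℚ)⁻¹ • (C g * X 1 + X 0 * C f + X 0 * C w * X 1) ^ m with hFdef
  -- Step A: formula for the contraction functional on F
  have hTj : ∀ j : ℕ, eval (0 : Fin 2 → B) ((pderiv (0 : Fin 2))^[j] ((pderiv (1 : Fin 2))^[j] F))
      = ∑ m ∈ Finset.range N, algebraMap ℚ B ((m.factorial : ℚ)⁻¹) *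
          (if j ≤ m ∧ j ≤ m ∧ m ≤ j + j then
            ((j.factorial * m.choose j * (j.factorial * j.choose (j + j - m)) : ℕ) : B) *
              (g ^ (m - j) * (f ^ (m - j) * w ^ (j + j - m)))
          else 0) := by
    intro j
    have hF : F = ∑ m ∈ Finset.range N, C (algebraMap ℚ B ((m.factorial : ℚ)⁻¹)) *
        (C g * X 1 + X 0 * C f + X 0 * C w * X 1) ^ m :=
      Finset.sum_congr rfl fun m _ => hsmulR _ _
    rw [hF, iter_pd_sum, iter_pd_sum, map_sum]
    refine Finset.sum_congr rfl fun m _ => ?_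
    rw [iter_pd_C_mul, iter_pd_C_mul, map_mul, eval_C, Tab]
  -- Step B: trim the summation range to N
  have hzero_big : ∀ j, F.totalDegree + 1 ≤ j →
      eval (0 : Fin 2 → B) ((pderiv (0 : Fin 2))^[j] ((pderiv (1 : Fin 2))^[j] F)) = 0 := by
    intro j hj
    have h1 : (pderiv (1 : Fin 2))^[j] F = 0 := by
      rw [show j = (j - (F.totalDegree + 1)) + (F.totalDegree + 1) from by omega,
        Function.iterate_add_apply, iter_vanish 1 F.totalDegree F le_rfl, iter_pd_zero]
    rw [h1, iter_pd_zero, map_zero]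
  have hzero_N : ∀ j, N ≤ j →
      eval (0 : Fin 2 → B) ((pderiv (0 : Fin 2))^[j] ((pderiv (1 : Fin 2))^[j] F)) = 0 := by
    intro j hj
    rw [hTj j]
    refine Finset.sum_eq_zero fun m hm => ?_
    rw [if_neg (by simp at hm; omega), mul_zero]
  have hgc : gContr B F = ∑ j ∈ Finset.range N,
      (j.factorial : ℚ)⁻¹ • eval (0 : Fin 2 → B)
        ((pderiv (0 : Fin 2))^[j] ((pderiv (1 : Fin 2))^[j] F)) := by
    show (∑ j ∈ Finset.range (F.totalDegree + 1), (j.factorial : ℚ)⁻¹ • eval (0 : Fin 2 → B)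
        ((pderiv (0 : Fin 2))^[j] ((pderiv (1 : Fin 2))^[j] F))) = _
    calc ∑ j ∈ Finset.range (F.totalDegree + 1), (j.factorial : ℚ)⁻¹ • eval (0 : Fin 2 → B)
          ((pderiv (0 : Fin 2))^[j] ((pderiv (1 : Fin 2))^[j] F))
        = ∑ j ∈ Finset.range (max (F.totalDegree + 1) N), (j.factorial : ℚ)⁻¹ •
            eval (0 : Fin 2 → B) ((pderiv (0 : Fin 2))^[j] ((pderiv (1 : Fin 2))^[j] F)) := by
          refine Finset.sum_subset (Finset.range_subset_range.2 (le_max_left _ _)) ?_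
          intro j _ hj
          rw [hzero_big j (by simp at hj; omega), smul_zero]
      _ = ∑ j ∈ Finset.range N, (j.factorial : ℚ)⁻¹ •
            eval (0 : Fin 2 → B) ((pderiv (0 : Fin 2))^[j] ((pderiv (1 : Fin 2))^[j] F)) := by
          refine (Finset.sum_subset (Finset.range_subset_range.2 (le_max_right _ _)) ?_).symm
          intro j _ hj
          rw [hzero_N j (by simp at hj; omega), smul_zero]
  -- Step C: double sum over a product, filtered
  have hstep : gContr B F = ∑ p ∈ (Finset.range N ×ˢ Finset.range N).filter
        (fun p => p.1 ≤ p.2 ∧ p.2 ≤ p.1 + p.1),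
      algebraMap ℚ B ((p.1.factorial : ℚ)⁻¹ * (p.2.factorial : ℚ)⁻¹) *
        (((p.1.factorial * p.2.choose p.1 * (p.1.factorial * p.1.choose (p.1 + p.1 - p.2)) : ℕ) : B) *
          (g ^ (p.2 - p.1) * (f ^ (p.2 - p.1) * w ^ (p.1 + p.1 - p.2)))) := by
    rw [hgc, Finset.sum_filter]
    have hjm : ∀ j m : ℕ, (j.factorial : ℚ)⁻¹ • (algebraMap ℚ B ((m.factorial : ℚ)⁻¹) *
          (if j ≤ m ∧ j ≤ m ∧ m ≤ j + j then
            ((j.factorial * m.choose j * (j.factorial * j.choose (j + j - m)) : ℕ) : B) *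
              (g ^ (m - j) * (f ^ (m - j) * w ^ (j + j - m)))
          else 0))
        = (if j ≤ m ∧ m ≤ j + j then
            algebraMap ℚ B ((j.factorial : ℚ)⁻¹ * (m.factorial : ℚ)⁻¹) *
              (((j.factorial * m.choose j * (j.factorial * j.choose (j + j - m)) : ℕ) : B) *
                (g ^ (m - j) * (f ^ (m - j) * w ^ (j + j - m))))
          else 0) := by
      intro j m
      rw [hsmulB]
      by_cases hc : j ≤ m ∧ m ≤ j + j
      · rw [if_pos (by tauto), if_pos hc, map_mul]
        ring
      · rw [if_neg (by tauto), if_neg hc, mul_zero, mul_zero]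
    calc ∑ j ∈ Finset.range N, (j.factorial : ℚ)⁻¹ • eval (0 : Fin 2 → B)
          ((pderiv (0 : Fin 2))^[j] ((pderiv (1 : Fin 2))^[j] F))
        = ∑ j ∈ Finset.range N, ∑ m ∈ Finset.range N,
            (if j ≤ m ∧ m ≤ j + j then
              algebraMap ℚ B ((j.factorial : ℚ)⁻¹ * (m.factorial : ℚ)⁻¹) *
                (((j.factorial * m.choose j * (j.factorial * j.choose (j + j - m)) : ℕ) : B) *
                  (g ^ (m - j) * (f ^ (m - j) * w ^ (j + j - m))))
            else 0) := by
          refine Finset.sum_congr rfl fun j _ => ?_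
          rw [hTj j, Finset.smul_sum]
          exact Finset.sum_congr rfl fun m _ => hjm j m
      _ = _ := by rw [← Finset.sum_product']
  -- value identity
  have hval : ∀ j m : ℕ, j ≤ m → m ≤ j + j →
      algebraMap ℚ B ((j.factorial : ℚ)⁻¹ * (m.factorial : ℚ)⁻¹) *
        (((j.factorial * m.choose j * (j.factorial * j.choose (j + j - m)) : ℕ) : B) *
          (g ^ (m - j) * (f ^ (m - j) * w ^ (j + j - m))))
      = algebraMap ℚ B (((m - j).factorial : ℚ)⁻¹) *
          (((((m - j) + (j + j - m)).choose (j + j - m) : ℕ) : B) *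
            ((g * f) ^ (m - j) * w ^ (j + j - m))) := by
    intro j m h1 h2
    obtain ⟨n, k, rfl, rfl⟩ : ∃ n k, j = n + k ∧ m = 2 * n + k :=
      ⟨m - j, j + j - m, by omega, by omega⟩
    rw [show 2 * n + k - (n + k) = n from by omega,
      show (n + k) + (n + k) - (2 * n + k) = k from by omega]
    calc algebraMap ℚ B (((n + k).factorial : ℚ)⁻¹ * ((2 * n + k).factorial : ℚ)⁻¹) *
          ((((n + k).factorial * (2 * n + k).choose (n + k) *
            ((n + k).factorial * (n + k).choose k) : ℕ) : B) *
            (g ^ n * (f ^ n * w ^ k)))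
        = algebraMap ℚ B (((n + k).factorial : ℚ)⁻¹ * ((2 * n + k).factorial : ℚ)⁻¹ *
            (((n + k).factorial * (2 * n + k).choose (n + k) *
              ((n + k).factorial * (n + k).choose k) : ℕ) : ℚ)) *
            (g ^ n * (f ^ n * w ^ k)) := by
          simp only [map_mul, map_natCast]
          ring
      _ = algebraMap ℚ B ((n.factorial : ℚ)⁻¹ * (((n + k).choose k : ℕ) : ℚ)) *
            (g ^ n * (f ^ n * w ^ k)) := by rw [coeff_id]
      _ = algebraMap ℚ B ((n.factorial : ℚ)⁻¹) *
            ((((n + k).choose k : ℕ) : B) * ((g * f) ^ n * w ^ k)) := by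
          rw [map_mul, map_natCast, mul_pow]
          ring
  -- Step D: bijection to the (n, k) indexing
  have hbij : (∑ p ∈ (Finset.range N ×ˢ Finset.range N).filter
        (fun p => p.1 ≤ p.2 ∧ p.2 ≤ p.1 + p.1),
      algebraMap ℚ B ((p.1.factorial : ℚ)⁻¹ * (p.2.factorial : ℚ)⁻¹) *
        (((p.1.factorial * p.2.choose p.1 * (p.1.factorial * p.1.choose (p.1 + p.1 - p.2)) : ℕ) : B) *
          (g ^ (p.2 - p.1) * (f ^ (p.2 - p.1) * w ^ (p.1 + p.1 - p.2)))))
      = ∑ q ∈ (Finset.range S ×ˢ Finset.range S).filter (fun q => 2 * q.1 + q.2 < N),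
          algebraMap ℚ B ((q.1.factorial : ℚ)⁻¹) *
            ((((q.1 + q.2).choose q.2 : ℕ) : B) * ((g * f) ^ q.1 * w ^ q.2)) := by
    refine Finset.sum_bij' (fun p _ => (p.2 - p.1, p.1 + p.1 - p.2))
      (fun q _ => (q.1 + q.2, 2 * q.1 + q.2)) ?_ ?_ ?_ ?_ ?_
    · intro p hp
      simp only [Finset.mem_filter, Finset.mem_product, Finset.mem_range] at hp ⊢
      omega
    · intro q hq
      simp only [Finset.mem_filter, Finset.mem_product, Finset.mem_range] at hq ⊢
      omega
    · intro p hp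
      simp only [Finset.mem_filter, Finset.mem_product, Finset.mem_range] at hp
      ext <;> simp <;> omega
    · intro q hq
      simp only [Finset.mem_filter, Finset.mem_product, Finset.mem_range] at hq
      ext <;> simp <;> omega
    · intro p hp
      simp only [Finset.mem_filter, Finset.mem_product, Finset.mem_range] at hp
      exact hval p.1 p.2 hp.2.1 hp.2.2
  -- Step E: the right-hand side
  have hRHS : wt * ∑ m ∈ Finset.range M, (m.factorial : ℚ)⁻¹ • (g * wt * f) ^ m
      = ∑ q ∈ (Finset.range S ×ˢ Finset.range S).filter (fun q => 2 * q.1 + q.2 < N),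
          algebraMap ℚ B ((q.1.factorial : ℚ)⁻¹) *
            ((((q.1 + q.2).choose q.2 : ℕ) : B) * ((g * f) ^ q.1 * w ^ q.2)) := by
    calc wt * ∑ m ∈ Finset.range M, (m.factorial : ℚ)⁻¹ • (g * wt * f) ^ m
        = ∑ n ∈ Finset.range M, ∑ k ∈ Finset.range S,
            algebraMap ℚ B ((n.factorial : ℚ)⁻¹) *
              ((((n + k).choose k : ℕ) : B) * ((g * f) ^ n * w ^ k)) := by
          rw [Finset.mul_sum]
          refine Finset.sum_congr rfl fun n _ => ?_
          rw [hsmulB]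
          rw [show g * wt * f = (g * f) * wt from by ring, mul_pow]
          rw [show wt * (algebraMap ℚ B ((n.factorial : ℚ)⁻¹) * ((g * f) ^ n * wt ^ n))
              = algebraMap ℚ B ((n.factorial : ℚ)⁻¹) * ((g * f) ^ n * wt ^ (n + 1)) from by ring]
          rw [wt_pow w wt hwt N hN1 hwN S (by omega) n, Finset.mul_sum, Finset.mul_sum]
          refine Finset.sum_congr rfl fun k _ => ?_
          ring
      _ = ∑ n ∈ Finset.range S, ∑ k ∈ Finset.range S,
            algebraMap ℚ B ((n.factorial : ℚ)⁻¹) *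
              ((((n + k).choose k : ℕ) : B) * ((g * f) ^ n * w ^ k)) := by
          refine Finset.sum_subset (Finset.range_subset_range.2 (by omega)) ?_
          intro n _ hn
          refine Finset.sum_eq_zero fun k _ => ?_
          rw [pow_vanish (g * f) M hgfM n (by simp at hn; omega), zero_mul, mul_zero, mul_zero]
      _ = ∑ q ∈ Finset.range S ×ˢ Finset.range S,
            algebraMap ℚ B ((q.1.factorial : ℚ)⁻¹) *
              ((((q.1 + q.2).choose q.2 : ℕ) : B) * ((g * f) ^ q.1 * w ^ q.2)) := by
          rw [← Finset.sum_product']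
      _ = _ := by
          refine (Finset.sum_subset (Finset.filter_subset _ _) ?_).symm
          intro q hq hq2
          simp only [Finset.mem_filter, Finset.mem_product, Finset.mem_range] at hq hq2
          rw [show (g * f) ^ q.1 * w ^ q.2 = g ^ q.1 * (f ^ q.1 * w ^ q.2) from by
            rw [mul_pow]; ring]
          rw [gen_vanish f g w N hN q.1 q.1 q.2 (by omega), mul_zero, mul_zero]
  exact (hstep.trans hbij).trans hRHS.symm
end
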